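/- Let n ≥ 1 and let r, s be non-negative integers with 4^r(8s+1) ≤ 2^n. Then #B_{r,s,n} = 2^r · #B_{0,s,n−2r} ≤ 2^{r+2}. -/

import Mathlib

/-- `B r s n` is the set of `k ∈ {1, …, 2^n}` with `k² ≡ 4^r (8 s + 1) (mod 2^n)`. -/
def B (r s n : ℕ) : Set ℤ :=
  {k : ℤ | 1 ≤ k ∧ k ≤ 2 ^ n ∧ k ^ 2 ≡ (4 : ℤ) ^ r * (8 * s + 1) [ZMOD 2 ^ n]}

open Finset


noncomputable def S (n : ℕ) (a : ℤ) : Finset ℤ :=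
  (Finset.Icc (1:ℤ) (2^n)).filter (fun k => (2^n : ℤ) ∣ k^2 - a)

lemma step (n : ℕ) (a : ℤ) (hn : 2 ≤ n) :
    (S n (4 * a)).card = 2 * (S (n - 2) a).card := by
  set h : ℤ := 2 ^ (n - 2) with hh
  have hpos : 0 < h := by positivity
  have h2n : (2:ℤ) ^ n = 4 * h := by
    rw [hh, show n = 2 + (n - 2) by omega, pow_add]; norm_num
  have key : S n (4 * a) =
      (S (n-2) a).image (fun m => 2 * m) ∪ (S (n-2) a).image (fun m => 2 * m + 2 * h) := by
    ext k
    simp only [S, mem_union, mem_image, mem_filter, mem_Icc, ← hh, h2n]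
    constructor
    · rintro ⟨⟨hk1, hk2⟩, hdvd⟩
      have h4 : (4:ℤ) ∣ k^2 := by
        have h1 : (4:ℤ) ∣ k^2 - 4*a := dvd_trans ⟨h, rfl⟩ hdvd
        have he : k^2 = (k^2 - 4*a) + 4*a := by ring
        rw [he]; exact dvd_add h1 ⟨a, rfl⟩
      have hke : Even k := by
        rcases Int.even_or_odd k with he | ho
        · exact he
        · exfalso
          have h1 : Odd (k^2) := ho.pow
          have h2 : (2:ℤ) ∣ k^2 := dvd_trans ⟨2, by norm_num⟩ h4
          rw [Int.odd_iff] at h1; omega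
      obtain ⟨m, hm⟩ := hke
      have hk2m : k = 2 * m := by omega
      have hm1 : 1 ≤ m := by omega
      have hm2h : m ≤ 2 * h := by nlinarith
      have hmd : h ∣ m^2 - a := by
        obtain ⟨t, ht⟩ := hdvd
        refine ⟨t, ?_⟩
        have he : k^2 - 4*a = 4*(m^2 - a) := by rw [hk2m]; ring
        nlinarith [ht, he]
      rcases le_or_gt m h with hmh | hmh
      · exact Or.inl ⟨m, ⟨⟨hm1, hmh⟩, hmd⟩, hk2m.symm⟩
      · refine Or.inr ⟨m - h, ⟨⟨by omega, by omega⟩, ?_⟩, by omega⟩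
        have he : (m - h)^2 - a = (m^2 - a) + h * (h - 2*m) := by ring
        rw [he]
        exact dvd_add hmd ⟨h - 2*m, rfl⟩
    · rintro (⟨m, ⟨⟨hm1, hm2⟩, hmd⟩, rfl⟩ | ⟨m, ⟨⟨hm1, hm2⟩, hmd⟩, rfl⟩)
      · refine ⟨⟨by omega, by nlinarith⟩, ?_⟩
        obtain ⟨t, ht⟩ := hmd
        exact ⟨t, by nlinarith⟩
      · refine ⟨⟨by nlinarith, by nlinarith⟩, ?_⟩
        obtain ⟨t, ht⟩ := hmd
        refine ⟨t + 2*m + h, ?_⟩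
        nlinarith
  rw [key, card_union_of_disjoint, card_image_of_injective, card_image_of_injective, two_mul]
  · intro x y hxy; dsimp at hxy; omega
  · intro x y hxy; dsimp at hxy; omega
  · rw [Finset.disjoint_left]
    rintro x hx hx'
    simp only [mem_image, S, mem_filter, mem_Icc, ← hh] at hx hx'
    obtain ⟨m, ⟨⟨hm1, hm2⟩, _⟩, rfl⟩ := hx
    obtain ⟨m', ⟨⟨hm1', hm2'⟩, _⟩, he⟩ := hx'
    omega

lemma keyodd (m : ℕ) (hm : 2 ≤ m) (x y : ℤ) (hx : Odd x) (hy : Odd y)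
    (hd : (2:ℤ)^m ∣ x^2 - y^2) : (2:ℤ)^(m-1) ∣ x - y ∨ (2:ℤ)^(m-1) ∣ x + y := by
  obtain ⟨c, hc⟩ := hx.sub_odd hy
  obtain ⟨d, hd'⟩ := hx.add_odd hy
  have hcd : c + d = x := by omega
  have hc2 : x - y = 2 * c := by omega
  have hd2 : x + y = 2 * d := by omega
  have hdm2 : (2:ℤ)^(m-2) ∣ c * d := by
    have h1 : (2:ℤ)^m = 4 * 2^(m-2) := by
      rw [show m = 2 + (m-2) by omega, pow_add]; norm_num
    have h2 : x^2 - y^2 = 4 * (c * d) := by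
      have he : x^2 - y^2 = (x - y) * (x + y) := by ring
      rw [he, hc2, hd2]; ring
    rw [h1, h2] at hd
    exact (mul_dvd_mul_iff_left (by norm_num : (4:ℤ) ≠ 0)).mp hd
  have hm1 : (2:ℤ)^(m-1) = 2 * 2^(m-2) := by
    rw [show m - 1 = 1 + (m-2) by omega, pow_add]; ring
  have hxodd : Odd (c + d) := hcd ▸ hx
  rcases Int.even_or_odd c with hce | hco
  · have hdo : Odd d := by
      rcases Int.even_or_odd d with hde | hdo
      · exfalso
        obtain ⟨u, hu⟩ := hce; obtain ⟨v, hv⟩ := hde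
        rw [Int.odd_iff] at hxodd; omega
      · exact hdo
    have hnd : ¬ (2:ℤ) ∣ d := by obtain ⟨j, hj⟩ := hdo; omega
    have h1 : (2:ℤ)^(m-2) ∣ c := Int.prime_two.pow_dvd_of_dvd_mul_right (m-2) hnd hdm2
    left; rw [hc2, hm1]; exact mul_dvd_mul_left 2 h1
  · have hnc : ¬ (2:ℤ) ∣ c := by obtain ⟨j, hj⟩ := hco; omega
    have h1 : (2:ℤ)^(m-2) ∣ d := Int.prime_two.pow_dvd_of_dvd_mul_left (m-2) hnc hdm2
    right; rw [hd2, hm1]; exact mul_dvd_mul_left 2 h1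

lemma mem_S_odd (m : ℕ) (hm : 1 ≤ m) (a : ℤ) (ha : Odd a) (k : ℤ) (hk : k ∈ S m a) : Odd k := by
  simp only [S, mem_filter, mem_Icc] at hk
  obtain ⟨-, hdvd⟩ := hk
  rcases Int.even_or_odd k with he | ho
  · exfalso
    have h2 : (2:ℤ) ∣ k^2 - a := dvd_trans (dvd_pow_self 2 (by omega)) hdvd
    have hk2 : Even (k^2) := by rw [sq]; exact he.mul_right k
    obtain ⟨u, hu⟩ := hk2; obtain ⟨v, hv⟩ := ha
    omega
  · exact ho

lemma bound (m : ℕ) (a : ℤ) (ha : Odd a) : (S m a).card ≤ 4 := by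
  rcases le_or_gt m 2 with hm | hm
  · have h1 : (S m a).card ≤ (Icc (1:ℤ) (2^m)).card := card_le_card (filter_subset _ _)
    have h2 : (Icc (1:ℤ) (2^m)).card = ((2:ℤ)^m).toNat := by
      rw [Int.card_Icc]; congr 1; ring
    have h3 : ((2:ℤ)^m).toNat ≤ 4 := by
      rw [Int.toNat_le]
      calc (2:ℤ)^m ≤ 2^2 := pow_le_pow_right₀ (by norm_num) hm
        _ = 4 := by norm_num
    omega
  · rcases Finset.eq_empty_or_nonempty (S m a) with hS | ⟨x₀, hx₀⟩
    · simp [hS]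
    set Hp : ℤ := 2^(m-1) with hHp
    have hHpos : 0 < Hp := by positivity
    have h2m : (2:ℤ)^m = 2 * Hp := by
      rw [hHp, ← pow_succ']; congr 1; omega
    have hsq : ∀ k ∈ S m a, (2:ℤ)^m ∣ k^2 - x₀^2 := by
      intro k hk
      have hk1 := hk; have hx1 := hx₀
      simp only [S, mem_filter] at hk1 hx1
      have he : k^2 - x₀^2 = (k^2 - a) - (x₀^2 - a) := by ring
      rw [he]; exact dvd_sub hk1.2 hx1.2
    have hodd : ∀ k ∈ S m a, Odd k := fun k hk => mem_S_odd m (by omega) a ha k hk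
    have hpm : ∀ k ∈ S m a, Hp ∣ k - x₀ ∨ Hp ∣ k + x₀ := by
      intro k hk
      exact keyodd m (by omega) k x₀ (hodd k hk) (hodd x₀ hx₀) (hsq k hk)
    have hcard : (S m a).card ≤ (Finset.univ : Finset (Bool × Bool)).card := by
      apply Finset.card_le_card_of_injOn
        (fun k => (decide (Hp ∣ k - x₀), decide (k ≤ Hp)))
      · intro k _; exact mem_univ _
      · intro k hk k' hk' heq
        rw [Finset.mem_coe] at hk hk'
        simp only [Prod.mk.injEq, decide_eq_decide] at heq
        obtain ⟨he1, he2⟩ := heq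
        have hdvd : Hp ∣ k - k' := by
          by_cases hc : Hp ∣ k - x₀
          · have hc' : Hp ∣ k' - x₀ := he1.mp hc
            have he : k - k' = (k - x₀) - (k' - x₀) := by ring
            rw [he]; exact dvd_sub hc hc'
          · have hc' : ¬ Hp ∣ k' - x₀ := fun hcc => hc (he1.mpr hcc)
            have h1 : Hp ∣ k + x₀ := (hpm k hk).resolve_left hc
            have h2 : Hp ∣ k' + x₀ := (hpm k' hk').resolve_left hc'
            have he : k - k' = (k + x₀) - (k' + x₀) := by ring
            rw [he]; exact dvd_sub h1 h2
        have hkb := hk; have hkb' := hk'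
        simp only [S, mem_filter, mem_Icc, h2m] at hkb hkb'
        obtain ⟨⟨hkl, hku⟩, -⟩ := hkb
        obtain ⟨⟨hkl', hku'⟩, -⟩ := hkb'
        have habs : |k - k'| < Hp := by
          rcases le_or_gt k Hp with h1 | h1
          · have h1' : k' ≤ Hp := he2.mp h1
            rw [abs_lt]; omega
          · have h1' : Hp < k' := by
              by_contra hcon; push_neg at hcon
              exact absurd (he2.mpr hcon) (by omega)
            rw [abs_lt]; omega
        have := Int.eq_zero_of_abs_lt_dvd hdvd habs
        omega
    simpa using hcard

lemma card_S (r : ℕ) : ∀ (n : ℕ) (a : ℤ), 1 ≤ a → (4:ℤ)^r * a ≤ 2^n →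
    (S n ((4:ℤ)^r * a)).card = 2^r * (S (n - 2*r) a).card := by
  induction r with
  | zero => intro n a _ _; simp
  | succ r ih =>
    intro n a ha h
    have h4r : (4:ℤ) ≤ 4^(r+1) := by
      calc (4:ℤ) = 4^1 := (pow_one 4).symm
        _ ≤ 4^(r+1) := pow_le_pow_right₀ (by norm_num) (by omega)
    have hn2 : 2 ≤ n := by
      by_contra hc
      push_neg at hc
      have h1 : (4:ℤ) ≤ 4^(r+1) * a := by nlinarith [h4r, ha]
      have h2 : (2:ℤ)^n ≤ 2 := by
        interval_cases n <;> norm_num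
      linarith
    have e1 : (4:ℤ)^(r+1) * a = 4 * ((4:ℤ)^r * a) := by ring
    have h2n : (2:ℤ)^n = 4 * 2^(n-2) := by
      rw [show n = 2 + (n - 2) by omega, pow_add]; norm_num
    have h' : (4:ℤ)^r * a ≤ 2^(n-2) := by
      rw [e1, h2n] at h; linarith
    rw [e1, step n _ hn2, ih (n-2) a ha h', show n - 2 - 2*r = n - 2*(r+1) by omega]
    ring

lemma B_eq (r s n : ℕ) : B r s n = ↑(S n ((4:ℤ)^r * (8*(s:ℤ)+1))) := by
  ext k
  simp only [B, S, Set.mem_setOf_eq, coe_filter, mem_Icc, Set.mem_setOf_eq]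
  constructor
  · rintro ⟨h1, h2, h3⟩
    exact ⟨⟨h1, h2⟩, (Int.modEq_iff_dvd.mp h3.symm)⟩
  · rintro ⟨⟨h1, h2⟩, h3⟩
    exact ⟨h1, h2, (Int.modEq_iff_dvd.mpr h3).symm⟩

theorem card_B (n r s : ℕ) (hn : 1 ≤ n) (h : (4 : ℤ) ^ r * (8 * s + 1) ≤ 2 ^ n) :
    (B r s n).ncard = 2 ^ r * (B 0 s (n - 2 * r)).ncard ∧
    (B r s n).ncard ≤ 2 ^ (r + 2) := by
  have ha : (1:ℤ) ≤ 8*(s:ℤ)+1 := by omega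
  have hmain := card_S r n (8*(s:ℤ)+1) ha h
  have hB : (B r s n).ncard = (S n ((4:ℤ)^r * (8*(s:ℤ)+1))).card := by
    rw [B_eq, Set.ncard_coe_finset]
  have hB0 : (B 0 s (n - 2*r)).ncard = (S (n - 2*r) (8*(s:ℤ)+1)).card := by
    rw [B_eq, Set.ncard_coe_finset]
    congr 1
    ring
  constructor
  · rw [hB, hB0, hmain]
  · rw [hB, hmain]
    have hb := bound (n - 2*r) (8*(s:ℤ)+1) ⟨4*s, by ring⟩
    calc 2^r * (S (n - 2*r) (8*(s:ℤ)+1)).card ≤ 2^r * 4 := by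
          exact Nat.mul_le_mul_left _ hb
      _ = 2^(r+2) := by rw [pow_add]; norm_num
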